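/- Let A ∈ GL(m, ℚ) with separable characteristic polynomial. Then χ_{A^k} is separable for all k ∈ ℕ if and only if no ratio λ/μ of two (distinct, counted with multiplicity) eigenvalues of A is a root of unity. -/

import Mathlib

open Polynomial Matrix Finset

lemma aux_charpoly_pow_comp {m : ℕ} (M : Matrix (Fin m) (Fin m) ℂ) {k : ℕ} {ζ : ℂ}
    (hζ : IsPrimitiveRoot ζ k) (hk : 0 < k) :
    (M ^ k).charpoly.comp ((X : ℂ[X]) ^ k) =
      ∏ j ∈ Finset.range k, ((ζ ^ j : ℂ) • M).charpoly := by
  classical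
  have hζ' : IsPrimitiveRoot (C ζ : ℂ[X]) k :=
    hζ.map_of_injective (f := (C : ℂ →+* ℂ[X])) Polynomial.C_injective
  have key : ((X : ℂ[X][X]) ^ k - Polynomial.C ((X : ℂ[X]) ^ k)) =
      ∏ j ∈ Finset.range k, ((X : ℂ[X][X]) - Polynomial.C ((C ζ) ^ j * (X : ℂ[X]))) :=
    X_pow_sub_C_eq_prod hζ' hk rfl
  set B : Matrix (Fin m) (Fin m) ℂ[X] := M.map (C : ℂ → ℂ[X]) with hB
  have hcomm : ∀ p : ℂ[X], Commute ((aeval B : ℂ[X] →ₐ[ℂ] Matrix (Fin m) (Fin m) ℂ[X]) p)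
      (Matrix.scalar (Fin m) (X : ℂ[X])) :=
    fun p => (Matrix.scalar_commute (X : ℂ[X]) (fun r => mul_comm _ _) _).symm
  set Θ : ℂ[X][X] →+* Matrix (Fin m) (Fin m) ℂ[X] :=
    eval₂RingHom' (aeval B : ℂ[X] →ₐ[ℂ] Matrix (Fin m) (Fin m) ℂ[X]).toRingHom
      (Matrix.scalar (Fin m) (X : ℂ[X])) hcomm with hΘ
  have hX : Θ X = Matrix.scalar (Fin m) (X : ℂ[X]) := by
    simp [hΘ, eval₂RingHom']
  have hC : ∀ p : ℂ[X], Θ (Polynomial.C p) = aeval B p := by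
    intro p; simp [hΘ, eval₂RingHom']
  -- left side computation
  have h1 : Θ ((X : ℂ[X][X]) ^ k - Polynomial.C ((X : ℂ[X]) ^ k)) =
      Matrix.scalar (Fin m) ((X : ℂ[X]) ^ k) - (M ^ k).map (C : ℂ → ℂ[X]) := by
    rw [map_sub, map_pow, hX, hC, map_pow, aeval_X]
    congr 1
    · exact (map_pow (Matrix.scalar (Fin m) : ℂ[X] →+* _) X k).symm
    · simpa [RingHom.mapMatrix_apply] using (map_pow ((C : ℂ →+* ℂ[X]).mapMatrix) M k).symm
  have h2 : ∀ j : ℕ, Θ ((X : ℂ[X][X]) - Polynomial.C ((C ζ) ^ j * (X : ℂ[X]))) =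
      charmatrix ((ζ ^ j : ℂ) • M) := by
    intro j
    rw [map_sub, hX, hC]
    have haev : (aeval B) ((C ζ) ^ j * (X : ℂ[X])) = (ζ ^ j : ℂ) • B := by
      rw [_root_.map_mul, aeval_X, map_pow, aeval_C, ← map_pow, ← Algebra.smul_def]
    rw [haev]
    have h2' : ((ζ ^ j : ℂ) • M).map (C : ℂ → ℂ[X]) = (ζ ^ j : ℂ) • B := by
      ext i l
      simp [Matrix.map_apply, hB, Polynomial.smul_C]
    rw [charmatrix, RingHom.mapMatrix_apply, h2']
  -- charpoly comp as a determinant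
  have h3 : (M ^ k).charpoly.comp ((X : ℂ[X]) ^ k) =
      (Matrix.scalar (Fin m) ((X : ℂ[X]) ^ k) - (M ^ k).map (C : ℂ → ℂ[X])).det := by
    have : (M ^ k).charpoly.comp ((X : ℂ[X]) ^ k) =
        (eval₂RingHom (C : ℂ →+* ℂ[X]) ((X : ℂ[X]) ^ k)) ((M ^ k).charpoly) := rfl
    rw [this, Matrix.charpoly, RingHom.map_det]
    congr 1
    ext i l
    by_cases h : i = l <;>
      simp [charmatrix_apply, Matrix.map_apply, Matrix.scalar_apply, Matrix.diagonal_apply, h,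
        Matrix.sub_apply, RingHom.mapMatrix_apply]
  -- put together via the determinant monoid hom
  have hD := congrArg (Matrix.detMonoidHom.comp Θ.toMonoidHom) key
  simp only [MonoidHom.comp_apply, map_prod] at hD
  have hD' : Matrix.det (Θ ((X : ℂ[X][X]) ^ k - Polynomial.C ((X : ℂ[X]) ^ k))) =
      ∏ j ∈ Finset.range k, Matrix.det (Θ ((X : ℂ[X][X]) - Polynomial.C ((C ζ) ^ j * (X : ℂ[X])))) := hD
  rw [h1] at hD'
  rw [h3, hD']
  exact Finset.prod_congr rfl fun j _ => by rw [h2 j]; rfl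

lemma aux_roots_charpoly_smul {m : ℕ} (M : Matrix (Fin m) (Fin m) ℂ) {c : ℂ} (hc : c ≠ 0) :
    ((c • M).charpoly).roots = M.charpoly.roots.map (fun z => c * z) := by
  classical
  -- the identity (c • M).charpoly.comp (C c * X) = C (c ^ m) * M.charpoly
  have hid : (c • M).charpoly.comp (C c * X) = C (c ^ m) * M.charpoly := by
    have h1 : (c • M).charpoly.comp (C c * X) =
        (eval₂RingHom (C : ℂ →+* ℂ[X]) (C c * X)) ((c • M).charpoly) := rfl
    rw [h1, Matrix.charpoly, RingHom.map_det]
    have h2 : (eval₂RingHom (C : ℂ →+* ℂ[X]) (C c * X)).mapMatrix (charmatrix (c • M)) =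
        (C c : ℂ[X]) • charmatrix M := by
      ext i l
      by_cases h : i = l <;>
        simp [charmatrix_apply, RingHom.mapMatrix_apply, Matrix.map_apply,
          Matrix.diagonal_apply, h, Matrix.smul_apply, smul_eq_mul, mul_sub, Matrix.sub_apply]
    rw [h2, Matrix.det_smul, Fintype.card_fin, ← C_pow, ← Matrix.charpoly]
  -- factor charpolys into linear factors
  have hsp : ∀ N : Matrix (Fin m) (Fin m) ℂ,
      N.charpoly = (N.charpoly.roots.map (fun w => X - C w)).prod :=
    fun N => (IsAlgClosed.splits _).eq_prod_roots_of_monic (charpoly_monic N)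
  have hcard : ∀ N : Matrix (Fin m) (Fin m) ℂ, Multiset.card N.charpoly.roots = m := by
    intro N
    rw [splits_iff_card_roots.mp (IsAlgClosed.splits _),
      Matrix.charpoly_natDegree_eq_dim, Fintype.card_fin]
  -- compute roots of LHS of hid
  have hcomp : (c • M).charpoly.comp (C c * X) =
      C (c ^ m) * ((c • M).charpoly.roots.map (fun w => X - C (c⁻¹ * w))).prod := by
    conv_lhs => rw [hsp (c • M)]
    rw [multiset_prod_comp, Multiset.map_map]
    have heq : ((c • M).charpoly.roots.map ((fun p => p.comp (C c * X)) ∘ (fun w => X - C w))) =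
        ((c • M).charpoly.roots.map (fun w => C c * (X - C (c⁻¹ * w)))) := by
      apply Multiset.map_congr rfl
      intro w _
      simp only [Function.comp_apply, sub_comp, X_comp, C_comp]
      rw [mul_sub, ← C_mul, mul_inv_cancel_left₀ hc]
    rw [heq, Multiset.prod_map_mul, Multiset.map_const', Multiset.prod_replicate, ← C_pow,
      hcard (c • M)]
  have hprod : M.charpoly = ((c • M).charpoly.roots.map (fun w => X - C (c⁻¹ * w))).prod := by
    have := hid.symm.trans hcomp
    exact mul_left_cancel₀ (by simpa using pow_ne_zero m hc) this
  have hroots : M.charpoly.roots = (c • M).charpoly.roots.map (fun w => c⁻¹ * w) := by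
    rw [hprod]
    have : (Multiset.map (fun w => X - C (c⁻¹ * w)) (c • M).charpoly.roots) =
        (Multiset.map (fun w => X - C w) ((c • M).charpoly.roots.map (fun w => c⁻¹ * w))) := by
      rw [Multiset.map_map]; rfl
    rw [this, roots_multiset_prod_X_sub_C]
  rw [hroots, Multiset.map_map]
  have : ((fun z => c * z) ∘ fun w => c⁻¹ * w) = id := by
    funext w; simp [mul_inv_cancel_left₀ hc]
  rw [this, Multiset.map_id]

lemma aux_bind_replicate {k : ℕ} (s : Multiset ℂ) :
    (s.bind fun z => Multiset.replicate k z) = k • s := by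
  induction s using Multiset.induction_on with
  | empty => simp
  | cons a s ih =>
    rw [Multiset.cons_bind, ih, ← Multiset.singleton_add, smul_add, Multiset.nsmul_singleton]

lemma aux_roots_ne_zero {m : ℕ} (M : Matrix (Fin m) (Fin m) ℂ) (hdet : M.det ≠ 0) :
    ∀ z ∈ M.charpoly.roots, z ≠ 0 := by
  intro z hz hz0
  subst hz0
  have h0 : M.charpoly.eval 0 = 0 := (Polynomial.mem_roots'.mp hz).2
  apply hdet
  rw [Matrix.det_eq_sign_charpoly_coeff, Polynomial.coeff_zero_eq_eval_zero, h0, mul_zero]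

lemma aux_roots_charpoly_pow {m : ℕ} (M : Matrix (Fin m) (Fin m) ℂ) (hdet : M.det ≠ 0)
    {k : ℕ} (hk : 0 < k) :
    (M ^ k).charpoly.roots = M.charpoly.roots.map (fun z => z ^ k) := by
  classical
  obtain ⟨ζ, hζ⟩ : ∃ ζ : ℂ, IsPrimitiveRoot ζ k := ⟨_, Complex.isPrimitiveRoot_exp k hk.ne'⟩
  have hζ0 : ζ ≠ 0 := fun h => by simpa [h, zero_pow hk.ne'] using hζ.pow_eq_one
  have hsp : ∀ N : Matrix (Fin m) (Fin m) ℂ,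
      N.charpoly = (N.charpoly.roots.map (fun w => X - C w)).prod :=
    fun N => (IsAlgClosed.splits _).eq_prod_roots_of_monic (charpoly_monic N)
  set S := M.charpoly.roots with hS
  set S' := (M ^ k).charpoly.roots with hS'
  -- LHS of the comp identity
  have hL : ((M ^ k).charpoly.comp ((X : ℂ[X]) ^ k)).roots = S'.bind (nthRoots k) := by
    conv_lhs => rw [hsp (M ^ k)]
    rw [multiset_prod_comp, Multiset.map_map]
    have h1 : (S'.map ((fun p => p.comp ((X : ℂ[X]) ^ k)) ∘ fun w => X - C w)) =
        S'.map (fun w => X ^ k - C w) := by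
      apply Multiset.map_congr rfl
      intro w _
      simp [sub_comp]
    rw [h1, roots_multiset_prod, Multiset.bind_map]
    · rfl
    · intro h0
      obtain ⟨w, _, hw⟩ := Multiset.mem_map.mp h0
      exact (monic_X_pow_sub_C w hk.ne').ne_zero hw
  -- RHS of the comp identity
  have hR : (∏ j ∈ Finset.range k, ((ζ ^ j : ℂ) • M).charpoly).roots =
      S.bind (fun z => nthRoots k (z ^ k)) := by
    rw [roots_prod _ _ (Finset.prod_ne_zero_iff.mpr fun j _ => (charpoly_monic _).ne_zero)]
    have h2 : ((Finset.range k).val.bind fun j => ((ζ ^ j : ℂ) • M).charpoly.roots) =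
        (Multiset.range k).bind fun j => S.map (fun z => ζ ^ j * z) := by
      rw [Finset.range_val]
      exact Multiset.bind_congr (fun j _ => aux_roots_charpoly_smul M (pow_ne_zero j hζ0))
    rw [h2, Multiset.bind_map_comm]
    exact Multiset.bind_congr fun z _ => (hζ.nthRoots_eq rfl).symm
  have hE : S'.bind (nthRoots k) = (S.map (fun z => z ^ k)).bind (nthRoots k) := by
    rw [← hL, aux_charpoly_pow_comp M hζ hk, hR, Multiset.bind_map]
  -- all relevant elements are nonzero
  have hS0 : ∀ z ∈ S, z ≠ 0 := aux_roots_ne_zero M hdet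
  have hS'0 : ∀ z ∈ S', z ≠ 0 := by
    apply aux_roots_ne_zero
    rw [Matrix.det_pow]
    exact pow_ne_zero k hdet
  have hT0 : ∀ z ∈ S.map (fun z => z ^ k), z ≠ 0 := by
    intro z hz
    obtain ⟨w, hw, rfl⟩ := Multiset.mem_map.mp hz
    exact pow_ne_zero k (hS0 w hw)
  -- mapping k-th power over nthRoots gives replicate
  have hrep : ∀ z : ℂ, z ≠ 0 → (nthRoots k z).map (fun w => w ^ k) = Multiset.replicate k z := by
    intro z hz
    apply Multiset.eq_replicate.mpr
    constructor
    · rw [Multiset.card_map, hζ.card_nthRoots z,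
        if_pos (IsAlgClosed.exists_pow_nat_eq z hk)]
    · intro b hb
      obtain ⟨w, hw, rfl⟩ := Multiset.mem_map.mp hb
      exact (mem_nthRoots hk).mp hw
  have hmapE := congrArg (Multiset.map (fun w : ℂ => w ^ k)) hE
  rw [Multiset.map_bind, Multiset.map_bind] at hmapE
  rw [Multiset.bind_congr (fun z hz => hrep z (hS'0 z hz)),
    Multiset.bind_congr (fun z hz => hrep z (hT0 z hz)),
    aux_bind_replicate, aux_bind_replicate] at hmapE
  -- cancel the k • _
  ext a
  have := congrArg (Multiset.count a) hmapE
  rw [Multiset.count_nsmul, Multiset.count_nsmul] at this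
  exact Nat.eq_of_mul_eq_mul_left hk this

/-- Let `A ∈ GL(m, ℚ)` with separable characteristic polynomial. Then `χ_{A^k}`
is separable for all `k ≥ 1` iff no ratio of two distinct complex eigenvalues
of `A` is a root of unity. -/
theorem stmt_12 (m : ℕ) (A : Matrix (Fin m) (Fin m) ℚ) (hA : IsUnit A)
    (hsep : ∀ z : ℂ, (A.charpoly.map (algebraMap ℚ ℂ)).rootMultiplicity z ≤ 1) :
    (∀ k : ℕ, 0 < k →
        ∀ z : ℂ, ((A ^ k).charpoly.map (algebraMap ℚ ℂ)).rootMultiplicity z ≤ 1) ↔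
      (∀ lam mu : ℂ, lam ∈ (A.charpoly.map (algebraMap ℚ ℂ)).roots →
        mu ∈ (A.charpoly.map (algebraMap ℚ ℂ)).roots → lam ≠ mu →
        ∀ n : ℕ, 0 < n → (lam / mu) ^ n ≠ 1) := by
  classical
  set f := algebraMap ℚ ℂ with hf
  set N : Matrix (Fin m) (Fin m) ℂ := A.map f with hN
  have hmap : ∀ k : ℕ, (A ^ k).charpoly.map f = (N ^ k).charpoly := by
    intro k
    rw [← Matrix.charpoly_map]
    congr 1
    simpa [RingHom.mapMatrix_apply] using map_pow (f.mapMatrix) A k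
  have hmap1 : A.charpoly.map f = N.charpoly := by
    simpa using hmap 1
  have hdet : N.det ≠ 0 := by
    have hdA : IsUnit A.det := (Matrix.isUnit_iff_isUnit_det A).mp hA
    have : N.det = f A.det := (RingHom.map_det f A).symm
    rw [this]
    exact fun hz => hdA.ne_zero ((_root_.map_eq_zero f).mp hz)
  -- rootMultiplicity vs Nodup
  have hcount : ∀ p : ℂ[X], (∀ z, p.rootMultiplicity z ≤ 1) ↔ p.roots.Nodup := by
    intro p
    rw [Multiset.nodup_iff_count_le_one]
    constructor
    · intro h a; rw [Polynomial.count_roots]; exact h a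
    · intro h z; rw [← Polynomial.count_roots]; exact h z
  set S := N.charpoly.roots with hSdef
  have hS : S.Nodup := by
    rw [← hcount]
    intro z
    rw [← hmap1]
    exact hsep z
  have hS0 : ∀ z ∈ S, z ≠ 0 := aux_roots_ne_zero N hdet
  -- rewrite statement
  rw [hmap1]
  constructor
  · intro h lam mu hlam hmu hne n hn hpow
    have hmun : mu ≠ 0 := hS0 mu hmu
    have hlm : lam ^ n = mu ^ n := by
      rw [div_pow, div_eq_one_iff_eq (pow_ne_zero n hmun)] at hpow
      exact hpow
    have hnodup : ((N ^ n).charpoly).roots.Nodup := by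
      rw [← hcount]
      intro z
      have := h n hn z
      rwa [hmap n] at this
    rw [aux_roots_charpoly_pow N hdet hn] at hnodup
    have hinj := (Multiset.nodup_map_iff_inj_on hS).mp hnodup
    exact hne (hinj lam hlam mu hmu hlm)
  · intro h k hk z
    rw [hmap k, ← Polynomial.count_roots, aux_roots_charpoly_pow N hdet hk]
    have hnodup : (S.map (fun z => z ^ k)).Nodup := by
      apply (Multiset.nodup_map_iff_inj_on hS).mpr
      intro x hx y hy hxy
      by_contra hne
      apply h x y hx hy hne k hk
      have hy0 : y ≠ 0 := hS0 y hy
      rw [div_pow, hxy, div_self (pow_ne_zero k hy0)]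
    exact Multiset.nodup_iff_count_le_one.mp hnodup z
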